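/- If (log n + ω(1))/n ≤ p ≤ (1.1 log n)/n, then asymptotically almost surely in G ~ G(n,p): for every nonempty vertex set S consisting entirely of vertices of degree greater than log n/6, with |S| ≤ n/(log n)³, the number of edges between S and its complement is at least (log n/10)·|S|. -/

import Mathlib

open scoped Classical
open Filter

/-- Number of edges of a finite simple graph. -/
noncomputable def edgeCount {V : Type*} [Fintype V] (G : SimpleGraph V) : ℕ :=
  G.edgeFinset.card

/-- `G` contains `k` pairwise edge-disjoint spanning trees. -/
def HasDisjSpanningTrees {V : Type*} (G : SimpleGraph V) (k : ℕ) : Prop :=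
  ∃ f : Fin k → SimpleGraph V, (∀ i, f i ≤ G) ∧ (∀ i, (f i).IsTree) ∧
    ∀ i j, i ≠ j → Disjoint (f i).edgeSet (f j).edgeSet

/-- Spanning tree packing number: the maximum number of pairwise
edge-disjoint spanning trees of `G`. -/
noncomputable def stp {V : Type*} (G : SimpleGraph V) : ℕ :=
  sSup {k | HasDisjSpanningTrees G k}

/-- Number of edges of `G` between `S` and its complement. -/
noncomputable def crossCount {V : Type*} [Fintype V] (G : SimpleGraph V) (S : Finset V) : ℕ :=
  ((S ×ˢ Sᶜ).filter fun e => G.Adj e.1 e.2).card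

/-- Number of crossing edges of a partition `P` of the vertex set:
edges whose two endpoints lie in different parts of `P`. -/
noncomputable def partCross {V : Type*} [Fintype V] (G : SimpleGraph V)
    (P : Finpartition (Finset.univ : Finset V)) : ℕ :=
  (G.edgeFinset.filter fun e => ∀ t ∈ P.parts, ¬ ∀ v ∈ e, v ∈ t).card

/-- Probability that the Erdős–Rényi random graph `G(n,p)` satisfies `Q`. -/
noncomputable def grProb (n : ℕ) (p : ℝ) (Q : SimpleGraph (Fin n) → Prop) : ℝ :=
  ∑ G : SimpleGraph (Fin n),
    if Q G then p ^ edgeCount G * (1 - p) ^ (n.choose 2 - edgeCount G) else 0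


section Aux
open Finset

-- binomial identity
lemma binom_sum {α : Type*} [DecidableEq α] (u : Finset α) (x y : ℝ) :
    ∑ t ∈ u.powerset, x ^ t.card * y ^ (u.card - t.card) = (x + y) ^ u.card := by
  rw [← Finset.prod_const, Finset.prod_add]
  refine Finset.sum_congr rfl fun t ht => ?_
  rw [Finset.mem_powerset] at ht
  rw [Finset.prod_const, Finset.prod_const, Finset.card_sdiff_of_subset ht]

-- reindex graphs by edge sets
lemma graph_sum {n : ℕ} (f : Finset (Sym2 (Fin n)) → ℝ) :
    ∑ G : SimpleGraph (Fin n), f G.edgeFinset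
      = ∑ t ∈ (⊤ : SimpleGraph (Fin n)).edgeFinset.powerset, f t := by
  refine Finset.sum_nbij' (fun G => G.edgeFinset)
    (fun t => SimpleGraph.fromEdgeSet ↑t) ?_ ?_ ?_ ?_ ?_
  · intro G _
    simpa using SimpleGraph.edgeFinset_mono (le_top : G ≤ ⊤)
  · intro t _; exact Finset.mem_univ _
  · intro G _
    simp [SimpleGraph.fromEdgeSet_edgeSet]
  · intro t ht
    rw [Finset.mem_powerset] at ht
    ext e
    simp only [SimpleGraph.mem_edgeFinset, SimpleGraph.edgeSet_fromEdgeSet, Set.mem_diff,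
      Finset.mem_coe, Set.mem_setOf_eq]
    constructor
    · rintro ⟨he, -⟩; exact he
    · intro he
      refine ⟨he, ?_⟩
      have := ht he
      rw [SimpleGraph.mem_edgeFinset, SimpleGraph.edgeSet_top] at this
      exact this
  · intro G _; rfl

lemma weight_sum_one (n : ℕ) (p : ℝ) :
    ∑ G : SimpleGraph (Fin n),
      p ^ edgeCount G * (1 - p) ^ (n.choose 2 - edgeCount G) = 1 := by
  have hU : (⊤ : SimpleGraph (Fin n)).edgeFinset.card = n.choose 2 := by
    rw [SimpleGraph.card_edgeFinset_top_eq_card_choose_two, Fintype.card_fin]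
  calc ∑ G : SimpleGraph (Fin n), p ^ edgeCount G * (1 - p) ^ (n.choose 2 - edgeCount G)
      = ∑ t ∈ (⊤ : SimpleGraph (Fin n)).edgeFinset.powerset,
          p ^ t.card * (1 - p) ^ (n.choose 2 - t.card) :=
        graph_sum (fun t => p ^ t.card * (1 - p) ^ (n.choose 2 - t.card))
    _ = 1 := by rw [← hU, binom_sum]; simp

lemma grProb_add_not (n : ℕ) (p : ℝ) (Q : SimpleGraph (Fin n) → Prop) :
    grProb n p Q + grProb n p (fun G => ¬ Q G) = 1 := by
  rw [grProb, grProb, ← Finset.sum_add_distrib]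
  exact Eq.trans (Finset.sum_congr rfl fun G _ => by by_cases hq : Q G <;> simp [hq])
    (weight_sum_one n p)

lemma grProb_nonneg {n : ℕ} {p : ℝ} (hp0 : 0 ≤ p) (hp1 : p ≤ 1)
    (Q : SimpleGraph (Fin n) → Prop) : 0 ≤ grProb n p Q := by
  refine Finset.sum_nonneg fun G _ => ?_
  have : (0:ℝ) ≤ p ^ edgeCount G * (1 - p) ^ (n.choose 2 - edgeCount G) :=
    mul_nonneg (pow_nonneg hp0 _) (pow_nonneg (by linarith) _)
  split <;> simp [this]

lemma grProb_union_bound {n : ℕ} {p : ℝ} (hp0 : 0 ≤ p) (hp1 : p ≤ 1)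
    {ι : Type*} (s : Finset ι) (Q : SimpleGraph (Fin n) → Prop)
    (R : ι → SimpleGraph (Fin n) → Prop)
    (h : ∀ G, Q G → ∃ i ∈ s, R i G) :
    grProb n p Q ≤ ∑ i ∈ s, grProb n p (R i) := by
  have key : ∀ G : SimpleGraph (Fin n),
      (if Q G then p ^ edgeCount G * (1 - p) ^ (n.choose 2 - edgeCount G) else 0)
      ≤ ∑ i ∈ s, (if R i G then p ^ edgeCount G * (1 - p) ^ (n.choose 2 - edgeCount G) else 0) := by
    intro G
    have hw : (0:ℝ) ≤ p ^ edgeCount G * (1 - p) ^ (n.choose 2 - edgeCount G) :=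
      mul_nonneg (pow_nonneg hp0 _) (pow_nonneg (by linarith) _)
    by_cases hQ : Q G
    · obtain ⟨i, hi, hRi⟩ := h G hQ
      calc (if Q G then p ^ edgeCount G * (1 - p) ^ (n.choose 2 - edgeCount G) else 0)
          = (if R i G then p ^ edgeCount G * (1 - p) ^ (n.choose 2 - edgeCount G) else 0) := by
            simp [hQ, hRi]
        _ ≤ _ := Finset.single_le_sum
            (f := fun j => if R j G then p ^ edgeCount G * (1 - p) ^ (n.choose 2 - edgeCount G) else 0)
            (fun j _ => by split <;> simp [hw]) hi
    · simp only [hQ, if_false]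
      exact Finset.sum_nonneg fun j _ => by split <;> simp [hw]
  calc grProb n p Q ≤ ∑ G : SimpleGraph (Fin n),
        ∑ i ∈ s, (if R i G then p ^ edgeCount G * (1 - p) ^ (n.choose 2 - edgeCount G) else 0) :=
        Finset.sum_le_sum fun G _ => key G
    _ = ∑ i ∈ s, grProb n p (R i) := by rw [Finset.sum_comm]; rfl

lemma grProb_subedges {n : ℕ} (p : ℝ) (F : Finset (Sym2 (Fin n)))
    (hF : F ⊆ (⊤ : SimpleGraph (Fin n)).edgeFinset) :
    grProb n p (fun G => F ⊆ G.edgeFinset) = p ^ F.card := by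
  classical
  set U := (⊤ : SimpleGraph (Fin n)).edgeFinset with hUdef
  have hU : U.card = n.choose 2 := by
    rw [hUdef, SimpleGraph.card_edgeFinset_top_eq_card_choose_two, Fintype.card_fin]
  have step1 : grProb n p (fun G => F ⊆ G.edgeFinset)
      = ∑ t ∈ U.powerset, (if F ⊆ t then p ^ t.card * (1 - p) ^ (n.choose 2 - t.card) else 0) := by
    rw [grProb]
    exact Eq.trans (Finset.sum_congr rfl fun G _ => by by_cases h : F ⊆ G.edgeFinset <;> simp [h, edgeCount])
      (graph_sum (fun t => if F ⊆ t then p ^ t.card * (1 - p) ^ (n.choose 2 - t.card) else 0))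
  rw [step1, Finset.sum_ite, Finset.sum_const_zero, add_zero]
  have step2 : ∑ t ∈ U.powerset.filter (fun t => F ⊆ t),
      p ^ t.card * (1 - p) ^ (n.choose 2 - t.card)
      = ∑ t' ∈ (U \ F).powerset,
        p ^ (F.card + t'.card) * (1 - p) ^ (n.choose 2 - (F.card + t'.card)) := by
    refine Finset.sum_nbij' (fun t => t \ F) (fun t' => F ∪ t') ?_ ?_ ?_ ?_ ?_
    · intro t ht
      simp only [Finset.mem_filter, Finset.mem_powerset] at ht
      exact Finset.mem_powerset.2 (Finset.sdiff_subset_sdiff ht.1 le_rfl)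
    · intro t' ht'
      rw [Finset.mem_powerset] at ht'
      refine Finset.mem_filter.2 ⟨Finset.mem_powerset.2 ?_, Finset.subset_union_left⟩
      exact Finset.union_subset hF (ht'.trans Finset.sdiff_subset)
    · intro t ht
      simp only [Finset.mem_filter, Finset.mem_powerset] at ht
      exact Finset.union_sdiff_of_subset ht.2
    · intro t' ht'
      rw [Finset.mem_powerset] at ht'
      exact Finset.union_sdiff_cancel_left
        (Finset.disjoint_of_subset_right ht' Finset.disjoint_sdiff)
    · intro t ht
      simp only [Finset.mem_filter, Finset.mem_powerset] at ht
      have : F.card + (t \ F).card = t.card := by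
        rw [add_comm]; exact Finset.card_sdiff_add_card_eq_card ht.2
      rw [this]
  rw [step2]
  have step3 : ∀ t' ∈ (U \ F).powerset,
      p ^ (F.card + t'.card) * (1 - p) ^ (n.choose 2 - (F.card + t'.card))
      = p ^ F.card * (p ^ t'.card * (1 - p) ^ ((U \ F).card - t'.card)) := by
    intro t' ht'
    rw [Finset.mem_powerset] at ht'
    have h1 : (U \ F).card = U.card - F.card := Finset.card_sdiff_of_subset hF
    have h2 : n.choose 2 - (F.card + t'.card) = (U \ F).card - t'.card := by
      rw [h1, ← hU]; omega
    rw [pow_add, h2, mul_assoc]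
  rw [Finset.sum_congr rfl step3, ← Finset.mul_sum, binom_sum]
  simp

lemma pow_self_le_factorial_mul_exp (m : ℕ) :
    (m : ℝ) ^ m ≤ (m.factorial : ℝ) * Real.exp m := by
  induction m with
  | zero => simp
  | succ k ih =>
    rcases Nat.eq_zero_or_pos k with hk | hk
    · subst hk; simp
    have hkR : (0:ℝ) < k := by exact_mod_cast hk
    have h1 : ((k:ℝ) + 1) ^ k ≤ (k:ℝ) ^ k * Real.exp 1 := by
      have heq : ((k:ℝ) + 1) = (k:ℝ) * (1 + 1/k) := by field_simp
      rw [heq, mul_pow]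
      have h2 : (1 + 1/(k:ℝ)) ^ k ≤ Real.exp 1 := by
        calc (1 + 1/(k:ℝ)) ^ k ≤ (Real.exp (1/k)) ^ k := by
              refine pow_le_pow_left₀ (by positivity) ?_ k
              have := Real.add_one_le_exp (1/(k:ℝ)); linarith
          _ = Real.exp ((k:ℝ) * (1/k)) := by rw [← Real.exp_nat_mul]
          _ = Real.exp 1 := by rw [mul_one_div, div_self (ne_of_gt hkR)]
      exact mul_le_mul_of_nonneg_left h2 (by positivity)
    have hker : (0:ℝ) ≤ (k:ℝ) + 1 := by positivity
    calc ((k+1 : ℕ) : ℝ) ^ (k+1) = ((k:ℝ)+1) * ((k:ℝ)+1) ^ k := by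
          push_cast; ring
      _ ≤ ((k:ℝ)+1) * ((k:ℝ) ^ k * Real.exp 1) := mul_le_mul_of_nonneg_left h1 hker
      _ ≤ ((k:ℝ)+1) * (((k.factorial : ℝ) * Real.exp k) * Real.exp 1) := by
          refine mul_le_mul_of_nonneg_left ?_ hker
          exact mul_le_mul_of_nonneg_right ih (le_of_lt (Real.exp_pos 1))
      _ = ((k+1 : ℕ).factorial : ℝ) * Real.exp ((k:ℕ)+1 : ℕ) := by
          rw [Nat.factorial_succ]
          push_cast
          rw [Real.exp_add]
          ring

lemma degree_sum_split {n : ℕ} (G : SimpleGraph (Fin n)) (S : Finset (Fin n)) :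
    ∑ v ∈ S, G.degree v
      = ((S ×ˢ S).filter fun e => G.Adj e.1 e.2).card + crossCount G S := by
  have hc : crossCount G S = ((S ×ˢ Sᶜ).filter fun e => G.Adj e.1 e.2).card := by
    rw [crossCount]; congr 1; ext e; simp
  have hdeg : ∀ v : Fin n, G.degree v
      = (S.filter (G.Adj v)).card + (Sᶜ.filter (G.Adj v)).card := by
    intro v
    have e1 : (G.neighborFinset v).filter (fun x => x ∈ S) = S.filter (G.Adj v) := by
      ext x; simp [SimpleGraph.mem_neighborFinset, and_comm]
    have e2 : (G.neighborFinset v).filter (fun x => ¬ x ∈ S) = Sᶜ.filter (G.Adj v) := by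
      ext x; simp [SimpleGraph.mem_neighborFinset, and_comm]
    rw [← SimpleGraph.card_neighborFinset_eq_degree,
      ← Finset.card_filter_add_card_filter_not (p := fun x => x ∈ S), e1, e2]
  have hprod : ∀ (T : Finset (Fin n)),
      ((S ×ˢ T).filter fun e => G.Adj e.1 e.2).card = ∑ v ∈ S, (T.filter (G.Adj v)).card := by
    intro T
    rw [Finset.card_filter, Finset.sum_product]
    exact Finset.sum_congr rfl fun v _ => (Finset.card_filter _ _).symm
  rw [hc, hprod S, hprod Sᶜ, ← Finset.sum_add_distrib]
  exact Finset.sum_congr rfl fun v _ => hdeg v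

lemma in_eq_two_low {n : ℕ} (G : SimpleGraph (Fin n)) (S : Finset (Fin n)) :
    ((S ×ˢ S).filter fun e => G.Adj e.1 e.2).card
      = 2 * (((S ×ˢ S).filter fun e : Fin n × Fin n => e.1 < e.2).filter
          fun e => G.Adj e.1 e.2).card := by
  set A := (S ×ˢ S).filter fun e : Fin n × Fin n => G.Adj e.1 e.2 with hA
  have h1 : ((S ×ˢ S).filter fun e : Fin n × Fin n => e.1 < e.2).filter
      (fun e => G.Adj e.1 e.2) = A.filter fun e => e.1 < e.2 := by
    rw [hA, Finset.filter_filter, Finset.filter_filter]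
    exact Finset.filter_congr fun e _ => by tauto
  rw [h1]
  have h2 : A.card = (A.filter fun e => e.1 < e.2).card
      + (A.filter fun e => ¬ e.1 < e.2).card :=
    (Finset.card_filter_add_card_filter_not _).symm
  have h3 : (A.filter fun e => ¬ e.1 < e.2).card = (A.filter fun e => e.1 < e.2).card := by
    refine Finset.card_bij (fun e _ => (e.2, e.1)) ?_ ?_ ?_
    · rintro ⟨a, b⟩ he
      simp only [hA, Finset.mem_filter, Finset.mem_product] at he ⊢
      obtain ⟨⟨⟨ha, hb⟩, hadj⟩, hlt⟩ := he
      refine ⟨⟨⟨hb, ha⟩, hadj.symm⟩, ?_⟩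
      exact lt_of_le_of_ne (not_lt.1 hlt) (Ne.symm hadj.ne)
    · rintro ⟨a, b⟩ _ ⟨c, d⟩ _ h
      simp only [Prod.mk.injEq] at h
      exact Prod.ext h.2 h.1
    · rintro ⟨a, b⟩ he
      simp only [hA, Finset.mem_filter, Finset.mem_product] at he
      obtain ⟨⟨⟨ha, hb⟩, hadj⟩, hlt⟩ := he
      refine ⟨(b, a), ?_, rfl⟩
      simp only [hA, Finset.mem_filter, Finset.mem_product]
      exact ⟨⟨⟨hb, ha⟩, hadj.symm⟩, not_lt.2 (le_of_lt hlt)⟩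
  omega

lemma bad_gives_F {n : ℕ} (G : SimpleGraph (Fin n)) (S : Finset (Fin n)) {L : ℝ} (hL : 0 ≤ L)
    (hS : S.Nonempty) (hdeg : ∀ v ∈ S, L / 6 < (G.degree v : ℝ))
    (hcross : (crossCount G S : ℝ) < L / 10 * S.card) :
    ∃ F ∈ ((S ×ˢ S).filter fun e : Fin n × Fin n => e.1 < e.2).powersetCard
        (⌊(S.card : ℝ) * L / 30⌋₊ + 1),
      ∀ e ∈ F, G.Adj e.1 e.2 := by
  set lowE := ((S ×ˢ S).filter fun e : Fin n × Fin n => e.1 < e.2).filter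
      fun e => G.Adj e.1 e.2 with hlowE
  have hsum : ((S.card : ℝ)) * (L / 6) < ∑ v ∈ S, (G.degree v : ℝ) := by
    have h := Finset.sum_lt_sum_of_nonempty hS hdeg
    rw [Finset.sum_const, nsmul_eq_mul] at h
    linarith
  have hsplit : (∑ v ∈ S, (G.degree v : ℝ))
      = (((S ×ˢ S).filter fun e => G.Adj e.1 e.2).card : ℝ) + crossCount G S := by
    rw [← Nat.cast_sum]
    exact_mod_cast congrArg (Nat.cast : ℕ → ℝ) (degree_sum_split G S)
  have hin : ((S.card : ℝ)) * L / 15 < (((S ×ˢ S).filter fun e => G.Adj e.1 e.2).card : ℝ) := by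
    rw [hsplit] at hsum
    nlinarith [hcross]
  have hlow : (S.card : ℝ) * L / 30 < (lowE.card : ℝ) := by
    have h2 := in_eq_two_low G S
    have : (((S ×ˢ S).filter fun e => G.Adj e.1 e.2).card : ℝ) = 2 * (lowE.card : ℝ) := by
      exact_mod_cast congrArg (Nat.cast : ℕ → ℝ) h2
    rw [this] at hin
    linarith
  have hm : ⌊(S.card : ℝ) * L / 30⌋₊ + 1 ≤ lowE.card := by
    have h0 : (0:ℝ) ≤ (S.card : ℝ) * L / 30 := by positivity
    have := (Nat.floor_lt h0).2 hlow
    omega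
  obtain ⟨F, hFsub, hFcard⟩ := Finset.exists_subset_card_eq hm
  refine ⟨F, ?_, ?_⟩
  · rw [Finset.mem_powersetCard]
    exact ⟨hFsub.trans (Finset.filter_subset _ _), hFcard⟩
  · intro e he
    have := hFsub he
    rw [hlowE, Finset.mem_filter] at this
    exact this.2

lemma grProb_congr {n : ℕ} (p : ℝ) (Q R : SimpleGraph (Fin n) → Prop)
    (h : ∀ G, Q G ↔ R G) : grProb n p Q = grProb n p R :=
  Finset.sum_congr rfl fun G _ => by by_cases hq : Q G <;> simp [hq, (h G).symm]

set_option maxHeartbeats 2000000 in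
lemma per_S_bound {n : ℕ} {p L E : ℝ} (hp0 : 0 ≤ p) (hp1 : p ≤ 1) (hL : 5 ≤ L)
    (hE : E = Real.exp 1)
    (hplt : p ≤ 1.1 * L / n) (S : Finset (Fin n)) (hS : S.Nonempty)
    (hsize : (S.card : ℝ) ≤ (n : ℝ) / L ^ 3) :
    grProb n p (fun G => (∀ v ∈ S, L / 6 < (G.degree v : ℝ))
        ∧ (crossCount G S : ℝ) < L / 10 * S.card)
      ≤ (((90 : ℝ) / L ^ 3) ^ ((L : ℝ)/30 : ℝ)) ^ S.card := by
  classical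
  set s := S.card with hs
  set m := ⌊(s : ℝ) * L / 30⌋₊ + 1 with hm
  set U := (S ×ˢ S).filter (fun e : Fin n × Fin n => e.1 < e.2) with hU
  set N := U.card with hN
  set b := (90 : ℝ) / L ^ 3 with hb
  have hL0 : (0:ℝ) < L := by linarith
  have hL3 : (0:ℝ) < L ^ 3 := by positivity
  have hs1 : 1 ≤ s := Finset.card_pos.2 hS
  have hsR : (1:ℝ) ≤ (s:ℝ) := by exact_mod_cast hs1
  have hn0 : (0:ℝ) < n := by
    have h1 : (1:ℝ) ≤ (n:ℝ) / L ^ 3 := le_trans hsR hsize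
    have h2 : L ^ 3 ≤ (n:ℝ) := by
      have := (one_le_div hL3).mp h1
      linarith
    linarith
  have hb0 : (0:ℝ) < b := by rw [hb]; positivity
  have hb1 : b ≤ 1 := by
    rw [hb, div_le_one hL3]
    have h125 : (5:ℝ)^3 ≤ L^3 := by
      refine pow_le_pow_left₀ (by norm_num) hL 3
    nlinarith [h125]
  have hmlb : (s : ℝ) * L / 30 ≤ (m : ℝ) := by
    rw [hm]
    push_cast
    exact le_of_lt (Nat.lt_floor_add_one _)
  have hm0 : (0:ℝ) < (m:ℝ) := by
    have : (0:ℝ) < (s:ℝ) * L / 30 + 1 := by positivity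
    rw [hm]; push_cast; positivity
  -- step 1: union bound over F
  have step1 : grProb n p (fun G => (∀ v ∈ S, L / 6 < (G.degree v : ℝ))
      ∧ (crossCount G S : ℝ) < L / 10 * S.card)
      ≤ ∑ F ∈ U.powersetCard m, grProb n p (fun G => ∀ e ∈ F, G.Adj e.1 e.2) := by
    refine grProb_union_bound hp0 hp1 _ _ _ fun G hG => ?_
    exact bad_gives_F G S (le_of_lt hL0) hS hG.1 hG.2
  -- step 2: each term equals p ^ m
  have step2 : ∀ F ∈ U.powersetCard m,
      grProb n p (fun G => ∀ e ∈ F, G.Adj e.1 e.2) = p ^ m := by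
    intro F hF
    rw [Finset.mem_powersetCard] at hF
    obtain ⟨hFU, hFcard⟩ := hF
    set F' := F.image (fun e : Fin n × Fin n => s(e.1, e.2)) with hF'
    have hlt : ∀ e ∈ F, e.1 < e.2 := by
      intro e he
      have := hFU he
      rw [hU, Finset.mem_filter] at this
      exact this.2
    have hinj : Set.InjOn (fun e : Fin n × Fin n => s(e.1, e.2)) ↑F := by
      rintro ⟨a, c⟩ ha ⟨a', c'⟩ ha' h
      simp only [Sym2.eq, Sym2.rel_iff', Prod.mk.injEq, Prod.swap_prod_mk] at h
      rcases h with ⟨h1, h2⟩ | ⟨h1, h2⟩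
      · exact Prod.ext h1 h2
      · exfalso
        have l1 := hlt _ ha
        have l2 := hlt _ ha'
        simp only at l1 l2
        subst h1; subst h2
        exact absurd l2 (not_lt.2 (le_of_lt l1))
    have hcard' : F'.card = m := by rw [hF', Finset.card_image_of_injOn hinj, hFcard]
    have hF'top : F' ⊆ (⊤ : SimpleGraph (Fin n)).edgeFinset := by
      intro x hx
      rw [hF', Finset.mem_image] at hx
      obtain ⟨e, he, rfl⟩ := hx
      rw [SimpleGraph.mem_edgeFinset, SimpleGraph.mem_edgeSet]
      exact ne_of_lt (hlt e he)
    have hiff : ∀ G : SimpleGraph (Fin n),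
        (∀ e ∈ F, G.Adj e.1 e.2) ↔ F' ⊆ G.edgeFinset := by
      intro G
      constructor
      · intro h x hx
        rw [hF', Finset.mem_image] at hx
        obtain ⟨e, he, rfl⟩ := hx
        rw [SimpleGraph.mem_edgeFinset, SimpleGraph.mem_edgeSet]
        exact h e he
      · intro h e he
        have : s(e.1, e.2) ∈ F' := by
          rw [hF']; exact Finset.mem_image_of_mem _ he
        have := h this
        rwa [SimpleGraph.mem_edgeFinset, SimpleGraph.mem_edgeSet] at this
    rw [grProb_congr p _ _ hiff, grProb_subedges p F' hF'top, hcard']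
  -- step 3: sum is a binomial coefficient
  have step3 : ∑ F ∈ U.powersetCard m, grProb n p (fun G => ∀ e ∈ F, G.Adj e.1 e.2)
      = (N.choose m : ℝ) * p ^ m := by
    rw [Finset.sum_congr rfl step2, Finset.sum_const, Finset.card_powersetCard, hN,
      nsmul_eq_mul]
  -- step 4: numeric bound
  have hNs : (N : ℝ) ≤ (s : ℝ) ^ 2 := by
    have : N ≤ s ^ 2 := by
      rw [hN, hs]
      calc U.card ≤ (S ×ˢ S).card := Finset.card_le_card (Finset.filter_subset _ _)
        _ = S.card * S.card := Finset.card_product _ _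
        _ = S.card ^ 2 := (sq S.card).symm
    exact_mod_cast this
  have hE1 : (0:ℝ) < E := by rw [hE]; exact Real.exp_pos 1
  have hE2 : E ≤ 2.7182818286 := by rw [hE]; exact le_of_lt Real.exp_one_lt_d9
  have hpn : p * n ≤ 1.1 * L := by
    have h := mul_le_mul_of_nonneg_right hplt (le_of_lt hn0)
    rwa [div_mul_cancel₀ _ (ne_of_gt hn0)] at h
  have hsL3 : (s:ℝ) * L ^ 3 ≤ n := (le_div_iff₀ hL3).mp hsize
  have hbase : (N : ℝ) * p * E / m ≤ b := by
    rw [div_le_iff₀ hm0, hb, div_mul_eq_mul_div, le_div_iff₀ hL3]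
    have key : (N:ℝ) * p * E * L ^ 3 ≤ 3 * s * L := by
      calc (N:ℝ) * p * E * L ^ 3 ≤ (s:ℝ)^2 * p * E * L ^ 3 := by
            have hx : (0:ℝ) ≤ p * E * L ^ 3 := by positivity
            calc (N:ℝ) * p * E * L ^ 3 = (N:ℝ) * (p * E * L ^ 3) := by ring
              _ ≤ (s:ℝ)^2 * (p * E * L ^ 3) := mul_le_mul_of_nonneg_right hNs hx
              _ = (s:ℝ)^2 * p * E * L ^ 3 := by ring
        _ = (s:ℝ) * p * E * ((s:ℝ) * L ^ 3) := by ring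
        _ ≤ (s:ℝ) * p * E * n := by
            refine mul_le_mul_of_nonneg_left hsL3 ?_
            positivity
        _ = (s:ℝ) * E * (p * n) := by ring
        _ ≤ (s:ℝ) * E * (1.1 * L) := by
            refine mul_le_mul_of_nonneg_left hpn ?_
            positivity
        _ = 1.1 * E * ((s:ℝ) * L) := by ring
        _ ≤ 1.1 * 2.7182818286 * ((s:ℝ) * L) := by
            refine mul_le_mul_of_nonneg_right (by linarith) ?_
            positivity
        _ ≤ 3 * ((s:ℝ) * L) := by
            refine mul_le_mul_of_nonneg_right (by norm_num) ?_
            positivity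
        _ = 3 * s * L := by ring
    have hm3 : 3 * (s:ℝ) * L ≤ 90 * m := by nlinarith [hmlb]
    linarith
  -- assemble
  have hchoose : (N.choose m : ℝ) ≤ (N:ℝ)^m / m.factorial := by
    have := Nat.choose_le_pow_div (α := ℝ) m N
    push_cast at this ⊢
    exact this
  have hmfpos : (0:ℝ) < (m.factorial : ℝ) := by exact_mod_cast Nat.factorial_pos m
  have hmm : (0:ℝ) < (m:ℝ)^m := by positivity
  have hNp : (0:ℝ) ≤ (N:ℝ)*p := by positivity
  have hfact := pow_self_le_factorial_mul_exp m
  have key1 : (N.choose m : ℝ) * p^m ≤ ((N:ℝ)*p)^m / m.factorial := by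
    calc (N.choose m:ℝ)*p^m ≤ ((N:ℝ)^m/m.factorial)*p^m :=
          mul_le_mul_of_nonneg_right hchoose (pow_nonneg hp0 m)
      _ = ((N:ℝ)*p)^m/m.factorial := by rw [mul_pow]; ring
  have hEm : E^m = Real.exp m := by rw [hE, Real.exp_one_pow]
  have key2 : ((N:ℝ)*p)^m / m.factorial ≤ ((N:ℝ)*p*E/m)^m := by
    rw [div_pow, div_le_div_iff₀ hmfpos hmm,
      show ((N:ℝ)*p*E)^m = ((N:ℝ)*p)^m * E^m from mul_pow _ _ _]
    calc ((N:ℝ)*p)^m * (m:ℝ)^m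
        ≤ ((N:ℝ)*p)^m * ((m.factorial : ℝ) * Real.exp m) :=
          mul_le_mul_of_nonneg_left hfact (pow_nonneg hNp m)
      _ = ((N:ℝ)*p)^m * E^m * m.factorial := by rw [hEm]; ring
  have key3 : ((N:ℝ)*p*E/m)^m ≤ b^m := by
    refine pow_le_pow_left₀ ?_ hbase m
    positivity
  have key4 : b^m ≤ (b ^ ((L:ℝ)/30 : ℝ))^s := by
    have h1 : (b:ℝ)^m = b ^ ((m:ℕ):ℝ) := (Real.rpow_natCast b m).symm
    have h2 : b ^ ((m:ℕ):ℝ) ≤ b ^ ((s:ℝ)*L/30) :=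
      Real.rpow_le_rpow_of_exponent_ge hb0 hb1 hmlb
    have h3 : b ^ ((s:ℝ)*L/30) = (b ^ ((L:ℝ)/30 : ℝ)) ^ ((s:ℕ):ℝ) := by
      rw [← Real.rpow_mul (le_of_lt hb0)]
      congr 1
      push_cast
      ring
    have h4 : (b ^ ((L:ℝ)/30:ℝ)) ^ ((s:ℕ):ℝ) = (b ^ ((L:ℝ)/30:ℝ)) ^ (s:ℕ) :=
      Real.rpow_natCast _ s
    rw [h1]
    rw [h3, h4] at h2
    exact h2
  calc grProb n p (fun G => (∀ v ∈ S, L / 6 < (G.degree v : ℝ))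
        ∧ (crossCount G S : ℝ) < L / 10 * S.card)
      ≤ ∑ F ∈ U.powersetCard m, grProb n p (fun G => ∀ e ∈ F, G.Adj e.1 e.2) := step1
    _ = (N.choose m : ℝ) * p ^ m := step3
    _ ≤ ((N:ℝ)*p)^m / m.factorial := key1
    _ ≤ ((N:ℝ)*p*E/m)^m := key2
    _ ≤ b^m := key3
    _ ≤ (b ^ ((L:ℝ)/30 : ℝ))^s := key4


end Aux

theorem aas_expansion_small_large_sets (p : ℕ → ℝ) (hp0 : ∀ n, 0 ≤ p n) (hp1 : ∀ n, p n ≤ 1)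
    (hlow : Filter.Tendsto (fun n : ℕ => (n : ℝ) * p n - Real.log n) Filter.atTop Filter.atTop)
    (hhigh : ∀ᶠ n : ℕ in Filter.atTop, p n ≤ 1.1 * Real.log n / n) :
    Filter.Tendsto
      (fun n : ℕ => grProb n (p n) fun G =>
        ∀ S : Finset (Fin n), S.Nonempty →
          (∀ v ∈ S, Real.log n / 6 < (G.degree v : ℝ)) →
          (S.card : ℝ) ≤ (n : ℝ) / (Real.log n) ^ 3 →
          Real.log n / 10 * S.card ≤ (crossCount G S : ℝ))
      Filter.atTop (nhds 1) := by
  classical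
  set Q : ∀ n : ℕ, SimpleGraph (Fin n) → Prop := fun n G =>
    ∀ S : Finset (Fin n), S.Nonempty →
      (∀ v ∈ S, Real.log n / 6 < (G.degree v : ℝ)) →
      (S.card : ℝ) ≤ (n : ℝ) / (Real.log n) ^ 3 →
      Real.log n / 10 * S.card ≤ (crossCount G S : ℝ) with hQ
  set c : ℕ → ℝ := fun n => ((90 : ℝ) / (Real.log n) ^ 3) ^ ((Real.log n)/30 : ℝ) with hc
  set f : ℕ → ℝ := fun n => grProb n (p n) (fun G => ¬ Q n G) with hf
  have hlogT : Tendsto (fun n : ℕ => Real.log n) atTop atTop :=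
    Real.tendsto_log_atTop.comp tendsto_natCast_atTop_atTop
  -- eventual bound on f
  have key : ∀ᶠ n : ℕ in atTop, f n ≤ Real.exp ((n:ℝ) * c n) - 1 := by
    filter_upwards [hhigh, hlogT.eventually_ge_atTop 5] with n hpn hL5
    set L := Real.log n with hLdef
    have hL0 : (0:ℝ) < L := by linarith
    have hb0 : (0:ℝ) < (90:ℝ) / L ^ 3 := by positivity
    have hc0 : 0 ≤ c n := le_of_lt (Real.rpow_pos_of_pos hb0 _)
    set Scal := (Finset.univ : Finset (Fin n)).powerset.filter
      (fun S => S.Nonempty ∧ (S.card : ℝ) ≤ (n : ℝ) / L ^ 3) with hScal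
    have step1 : f n ≤ ∑ S ∈ Scal, grProb n (p n)
        (fun G => (∀ v ∈ S, L / 6 < (G.degree v : ℝ))
          ∧ (crossCount G S : ℝ) < L / 10 * S.card) := by
      refine grProb_union_bound (hp0 n) (hp1 n) _ _ _ fun G hG => ?_
      simp only [hQ] at hG
      push_neg at hG
      obtain ⟨S, hS1, hS2, hS3, hS4⟩ := hG
      refine ⟨S, ?_, hS2, hS4⟩
      rw [hScal, Finset.mem_filter]
      exact ⟨Finset.mem_powerset.2 (Finset.subset_univ S), hS1, hS3⟩
    have step2 : ∑ S ∈ Scal, grProb n (p n)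
        (fun G => (∀ v ∈ S, L / 6 < (G.degree v : ℝ))
          ∧ (crossCount G S : ℝ) < L / 10 * S.card)
        ≤ ∑ S ∈ Scal, (c n) ^ S.card := by
      refine Finset.sum_le_sum fun S hSmem => ?_
      rw [hScal, Finset.mem_filter] at hSmem
      exact per_S_bound (hp0 n) (hp1 n) hL5 rfl hpn S hSmem.2.1 hSmem.2.2
    have step3 : ∑ S ∈ Scal, (c n) ^ S.card
        ≤ ∑ S ∈ (Finset.univ : Finset (Fin n)).powerset.filter (fun S => S.Nonempty),
            (c n) ^ S.card := by
      refine Finset.sum_le_sum_of_subset_of_nonneg ?_ (fun S _ _ => pow_nonneg hc0 _)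
      intro S hSmem
      rw [hScal, Finset.mem_filter] at hSmem
      rw [Finset.mem_filter]
      exact ⟨hSmem.1, hSmem.2.1⟩
    have step4 : ∑ S ∈ (Finset.univ : Finset (Fin n)).powerset.filter (fun S => S.Nonempty),
        (c n) ^ S.card = (c n + 1) ^ n - 1 := by
      have hsplit := Finset.sum_filter_add_sum_filter_not
        (Finset.univ : Finset (Fin n)).powerset (fun S => S.Nonempty)
        (fun S => (c n) ^ S.card)
      have hempty : (Finset.univ : Finset (Fin n)).powerset.filter
          (fun S => ¬ S.Nonempty) = {∅} := by
        ext T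
        simp [Finset.not_nonempty_iff_eq_empty]
      have htot : ∑ S ∈ (Finset.univ : Finset (Fin n)).powerset, (c n) ^ S.card
          = (c n + 1) ^ n := by
        have := binom_sum (Finset.univ : Finset (Fin n)) (c n) 1
        simpa using this
      rw [hempty] at hsplit
      simp only [Finset.sum_singleton, Finset.card_empty, pow_zero] at hsplit
      rw [htot] at hsplit
      linarith
    have step5 : (c n + 1) ^ n - 1 ≤ Real.exp ((n:ℝ) * c n) - 1 := by
      have h1 : (c n + 1) ^ n ≤ (Real.exp (c n)) ^ n := by
        refine pow_le_pow_left₀ (by positivity) ?_ n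
        linarith [Real.add_one_le_exp (c n)]
      rw [← Real.exp_nat_mul] at h1
      linarith
    calc f n ≤ _ := step1
      _ ≤ _ := step2
      _ ≤ _ := step3
      _ = (c n + 1) ^ n - 1 := step4
      _ ≤ Real.exp ((n:ℝ) * c n) - 1 := step5
  -- (n : ℝ) * c n → 0
  have hcn : Tendsto (fun n : ℕ => (n:ℝ) * c n) atTop (nhds 0) := by
    have hub : ∀ᶠ n : ℕ in atTop, (n:ℝ) * c n ≤ (n:ℝ)⁻¹ := by
      filter_upwards [hlogT.eventually_ge_atTop 90,
        (Real.tendsto_log_atTop.comp hlogT).eventually_ge_atTop 30,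
        eventually_ge_atTop 1] with n hL90 hLL30 hn1
      set L := Real.log n with hLdef
      have hL0 : (0:ℝ) < L := by linarith
      have hn0 : (0:ℝ) < n := by exact_mod_cast hn1
      have hb0 : (0:ℝ) < (90:ℝ) / L ^ 3 := by positivity
      have hnc : (n:ℝ) * c n = Real.exp (L + (L/30) * (Real.log 90 - 3 * L.log)) := by
        simp only [hc]
        rw [Real.rpow_def_of_pos hb0]
        have hlb : Real.log ((90:ℝ) / L ^ 3) = Real.log 90 - 3 * L.log := by
          rw [Real.log_div (by norm_num) (by positivity), Real.log_pow]
          push_cast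
          ring
        rw [hlb, Real.exp_add, Real.exp_log hn0]
        simp only [hLdef]
        congr 2
        ring
      have hexp : L + (L/30) * (Real.log 90 - 3 * L.log) ≤ -L := by
        have h90 : Real.log 90 ≤ L.log := Real.log_le_log (by norm_num) hL90
        have hLL : (30:ℝ) ≤ Real.log L := by
          simpa [Function.comp] using hLL30
        have h2 : (60:ℝ) ≤ 3 * Real.log L - Real.log 90 := by linarith
        have h3 : (L/30) * 60 ≤ (L/30) * (3 * Real.log L - Real.log 90) :=
          mul_le_mul_of_nonneg_left h2 (by positivity)
        linarith
      calc (n:ℝ) * c n = Real.exp (L + (L/30) * (Real.log 90 - 3 * L.log)) := hnc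
        _ ≤ Real.exp (-L) := Real.exp_le_exp.2 hexp
        _ = (Real.exp L)⁻¹ := by rw [Real.exp_neg]
        _ = (n:ℝ)⁻¹ := by rw [Real.exp_log hn0]
    have hlb : ∀ᶠ n : ℕ in atTop, (0:ℝ) ≤ (n:ℝ) * c n := by
      filter_upwards [hlogT.eventually_ge_atTop 5] with n hL5
      have hb0 : (0:ℝ) < (90:ℝ) / (Real.log n) ^ 3 := by positivity
      have : 0 ≤ c n := le_of_lt (Real.rpow_pos_of_pos hb0 _)
      positivity
    exact tendsto_of_tendsto_of_tendsto_of_le_of_le' tendsto_const_nhds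
      tendsto_inv_atTop_nhds_zero_nat hlb hub
  have hg : Tendsto (fun n : ℕ => Real.exp ((n:ℝ) * c n) - 1) atTop (nhds 0) := by
    have h1 : Tendsto (fun n : ℕ => Real.exp ((n:ℝ) * c n)) atTop (nhds 1) := by
      have := (Real.continuous_exp.tendsto 0).comp hcn
      simpa [Function.comp_def] using this
    simpa using h1.sub (tendsto_const_nhds (x := (1:ℝ)))
  have hf0 : Tendsto f atTop (nhds 0) := by
    refine tendsto_of_tendsto_of_tendsto_of_le_of_le' tendsto_const_nhds hg ?_ key
    exact Eventually.of_forall fun n => grProb_nonneg (hp0 n) (hp1 n) _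
  have heq : ∀ n : ℕ, grProb n (p n) (Q n) = 1 - f n := by
    intro n
    have := grProb_add_not n (p n) (Q n)
    rw [hf]
    linarith
  have : Tendsto (fun n : ℕ => grProb n (p n) (Q n)) atTop (nhds 1) := by
    simp only [heq]
    have := (tendsto_const_nhds (x := (1:ℝ)) (f := atTop)).sub hf0
    simpa using this
  exact this
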